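/- Let n ≥ 1, let g ∈ SU(n,n) have n×n blocks g = (A B; C D), and let X ∈ su(n,n) have n×n blocks X = (α β; γ δ). For t ∈ ℝ write g·exp(tX) = (A_t B_t; C_t D_t) in n×n blocks (exp = matrix exponential). Then D_t is invertible for all t (in particular near t = 0), the map t ↦ B_t D_t^{−1} is differentiable at t = 0 with B₀D₀^{−1} = BD^{−1}, and (d/dt)|_{t=0} (B_t D_t^{−1}) = (A*)^{−1} β D^{−1}; equivalently the derivative equals (A − BD^{−1}C) β D^{−1}, since A − BD^{−1}C = (A*)^{−1} for every g ∈ SU(n,n). -/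

import Mathlib

open MeasureTheory Complex Matrix Filter
open scoped ENNReal Real ComplexOrder

noncomputable section

/-- The space of `n × n` complex matrices. -/
abbrev Mat (n : ℕ) := Matrix (Fin n) (Fin n) ℂ

/-- The space of `2n × 2n` complex matrices, in `n × n` block form. -/
abbrev BMat (n : ℕ) := Matrix (Fin n ⊕ Fin n) (Fin n ⊕ Fin n) ℂ

/-- The matrix `J = diag(I_n, −I_n)`. -/
def Jmat (n : ℕ) : BMat n := Matrix.fromBlocks 1 0 0 (-1)

/-- The group `SU(n,n)`. -/
def SUnn (n : ℕ) : Set (BMat n) := {g | g.det = 1 ∧ gᴴ * Jmat n * g = Jmat n}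

/-- The Lie algebra `su(n,n)`. -/
def sunn (n : ℕ) : Set (BMat n) := {X | Xᴴ * Jmat n + Jmat n * X = 0 ∧ X.trace = 0}

/-- The matrix exponential `exp A = Σ Aᵏ/k!`. -/
def matExp (n : ℕ) (A : BMat n) : BMat n := ∑' k : ℕ, ((Nat.factorial k : ℂ))⁻¹ • A ^ k

/-! ### Auxiliary lemmas -/

lemma matExp_eq (n : ℕ) (A : BMat n) : matExp n A = NormedSpace.exp A := by
  rw [NormedSpace.exp_eq_tsum ℂ]; rfl

lemma J_mul_J (n : ℕ) : Jmat n * Jmat n = 1 := by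
  simp [Jmat, Matrix.fromBlocks_multiply, ← Matrix.fromBlocks_one]

lemma Jmat_inv (n : ℕ) : (Jmat n)⁻¹ = Jmat n := Matrix.inv_eq_right_inv (J_mul_J n)

lemma J_isUnit (n : ℕ) : IsUnit (Jmat n) := ⟨⟨Jmat n, Jmat n, J_mul_J n, J_mul_J n⟩, rfl⟩

/-- Block relations for elements of `SU(n,n)` (only the form condition is used). -/
lemma su_rel (n : ℕ) (h : BMat n) (hh : hᴴ * Jmat n * h = Jmat n) :
    h.toBlocks₁₁ᴴ * h.toBlocks₁₁ - h.toBlocks₂₁ᴴ * h.toBlocks₂₁ = 1 ∧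
    h.toBlocks₁₁ᴴ * h.toBlocks₁₂ - h.toBlocks₂₁ᴴ * h.toBlocks₂₂ = 0 ∧
    h.toBlocks₁₂ᴴ * h.toBlocks₁₂ - h.toBlocks₂₂ᴴ * h.toBlocks₂₂ = -1 := by
  set A := h.toBlocks₁₁; set B := h.toBlocks₁₂; set C := h.toBlocks₂₁; set D := h.toBlocks₂₂
  have hfb : h = Matrix.fromBlocks A B C D := (Matrix.fromBlocks_toBlocks h).symm
  rw [hfb, Matrix.fromBlocks_conjTranspose, Jmat, Matrix.fromBlocks_multiply,
    Matrix.fromBlocks_multiply] at hh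
  have h11 := congrArg Matrix.toBlocks₁₁ hh
  have h12 := congrArg Matrix.toBlocks₁₂ hh
  have h22 := congrArg Matrix.toBlocks₂₂ hh
  simp only [Matrix.toBlocks_fromBlocks₁₁, Matrix.toBlocks_fromBlocks₁₂,
    Matrix.toBlocks_fromBlocks₂₂, Matrix.mul_one, Matrix.mul_zero, Matrix.zero_mul,
    Matrix.mul_neg, add_zero, zero_add] at h11 h12 h22
  refine ⟨?_, ?_, ?_⟩
  · rw [sub_eq_add_neg]; convert h11 using 2 <;> simp [Matrix.mul_one]
  · rw [sub_eq_add_neg]; convert h12 using 2 <;> simp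
  · rw [sub_eq_add_neg]; convert h22 using 2 <;> simp

/-- If `Dᴴ D = 1 + Bᴴ B` then `D` is invertible. -/
lemma isUnit_of_chmul {n : ℕ} (B D : Mat n) (hrel : Dᴴ * D = 1 + Bᴴ * B) : IsUnit D := by
  have pd : (1 + Bᴴ * B : Mat n).PosDef :=
    Matrix.PosDef.add_posSemidef Matrix.PosDef.one (Matrix.posSemidef_conjTranspose_mul_self B)
  have hu : IsUnit (Dᴴ * D) := hrel ▸ pd.isUnit
  rw [Matrix.isUnit_iff_isUnit_det] at hu ⊢
  rw [Matrix.det_mul] at hu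
  exact isUnit_of_mul_isUnit_right hu

/-- The Schur-type identity `A − B D⁻¹ C = (Aᴴ)⁻¹`. -/
lemma schur_identity {n : ℕ} (A B C D : Mat n) (h11 : Aᴴ * A - Cᴴ * C = 1)
    (h12 : Aᴴ * B - Cᴴ * D = 0) (hD : IsUnit D) : A - B * D⁻¹ * C = (Aᴴ)⁻¹ := by
  symm
  apply Matrix.inv_eq_right_inv
  have hAB : Aᴴ * B = Cᴴ * D := sub_eq_zero.mp h12
  have h1 : Aᴴ * (A - B * D⁻¹ * C) = Aᴴ * A - (Aᴴ * B) * D⁻¹ * C := by noncomm_ring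
  rw [h1, hAB]
  have hDD : D * D⁻¹ = 1 := Matrix.mul_nonsing_inv _ (Matrix.isUnit_iff_isUnit_det D |>.mp hD)
  calc Aᴴ * A - Cᴴ * D * D⁻¹ * C = Aᴴ * A - Cᴴ * (D * D⁻¹) * C := by noncomm_ring
    _ = 1 := by rw [hDD]; simpa using h11

/-- `exp(tX)` preserves the form `J` when `X ∈ su(n,n)`. -/
lemma exp_mem (n : ℕ) (X : BMat n) (hX1 : Xᴴ * Jmat n + Jmat n * X = 0) (t : ℝ) :
    (NormedSpace.exp ((t : ℂ) • X))ᴴ * Jmat n * NormedSpace.exp ((t : ℂ) • X) = Jmat n := by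
  have hXc : Xᴴ = Jmat n * (-X) * (Jmat n)⁻¹ := by
    have h1 : Xᴴ * Jmat n = Jmat n * (-X) := by
      rw [Matrix.mul_neg]; exact eq_neg_of_add_eq_zero_left hX1
    calc Xᴴ = Xᴴ * (Jmat n * (Jmat n)⁻¹) := by rw [Jmat_inv, J_mul_J, Matrix.mul_one]
      _ = (Xᴴ * Jmat n) * (Jmat n)⁻¹ := by rw [Matrix.mul_assoc]
      _ = Jmat n * (-X) * (Jmat n)⁻¹ := by rw [h1]
  have hcH : ((t : ℂ) • X)ᴴ = Jmat n * (-((t : ℂ) • X)) * (Jmat n)⁻¹ := by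
    rw [Matrix.conjTranspose_smul, Complex.star_def, Complex.conj_ofReal, hXc]
    simp [Matrix.mul_smul, Matrix.smul_mul]
  have hexpH : (NormedSpace.exp ((t : ℂ) • X))ᴴ
      = Jmat n * NormedSpace.exp (-((t : ℂ) • X)) * (Jmat n)⁻¹ := by
    rw [← Matrix.exp_conjTranspose, hcH, Matrix.exp_conj _ _ (J_isUnit n)]
  rw [hexpH, Jmat_inv]
  have hee : NormedSpace.exp (-((t : ℂ) • X)) * NormedSpace.exp ((t : ℂ) • X) = 1 := by
    rw [← Matrix.exp_add_of_commute _ _ (Commute.neg_left (Commute.refl ((t : ℂ) • X))),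
      neg_add_cancel, NormedSpace.exp_zero]
  calc Jmat n * NormedSpace.exp (-((t : ℂ) • X)) * Jmat n * Jmat n
        * NormedSpace.exp ((t : ℂ) • X)
      = Jmat n * NormedSpace.exp (-((t : ℂ) • X)) * (Jmat n * Jmat n)
        * NormedSpace.exp ((t : ℂ) • X) := by
        simp [Matrix.mul_assoc]
    _ = Jmat n * (NormedSpace.exp (-((t : ℂ) • X)) * NormedSpace.exp ((t : ℂ) • X)) := by
        rw [J_mul_J, Matrix.mul_one, Matrix.mul_assoc]
    _ = Jmat n := by rw [hee, Matrix.mul_one]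

lemma hasDerivAt_comp_ofReal {F : Type*} [NormedAddCommGroup F] [NormedSpace ℂ F]
    {f : ℂ → F} {f' : F} {x : ℝ} (hf : HasDerivAt f f' (x : ℂ)) :
    HasDerivAt (fun t : ℝ => f t) f' x := by
  have h := (hf.hasFDerivAt.restrictScalars ℝ).comp_hasDerivAt x Complex.ofRealCLM.hasDerivAt
  simpa [Function.comp_def] using h

/-- `toBlocks₁₂` as a linear map. -/
def blk12 (n : ℕ) : BMat n →ₗ[ℂ] Mat n where
  toFun := Matrix.toBlocks₁₂
  map_add' _ _ := rfl
  map_smul' _ _ := rfl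

/-- `toBlocks₂₂` as a linear map. -/
def blk22 (n : ℕ) : BMat n →ₗ[ℂ] Mat n where
  toFun := Matrix.toBlocks₂₂
  map_add' _ _ := rfl
  map_smul' _ _ := rfl

lemma toBlocks₁₂_mul (n : ℕ) (M N : BMat n) :
    (M * N).toBlocks₁₂ = M.toBlocks₁₁ * N.toBlocks₁₂ + M.toBlocks₁₂ * N.toBlocks₂₂ := by
  have h : M * N = Matrix.fromBlocks M.toBlocks₁₁ M.toBlocks₁₂ M.toBlocks₂₁ M.toBlocks₂₂
      * Matrix.fromBlocks N.toBlocks₁₁ N.toBlocks₁₂ N.toBlocks₂₁ N.toBlocks₂₂ := by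
    rw [Matrix.fromBlocks_toBlocks, Matrix.fromBlocks_toBlocks]
  rw [h, Matrix.fromBlocks_multiply, Matrix.toBlocks_fromBlocks₁₂]

lemma toBlocks₂₂_mul (n : ℕ) (M N : BMat n) :
    (M * N).toBlocks₂₂ = M.toBlocks₂₁ * N.toBlocks₁₂ + M.toBlocks₂₂ * N.toBlocks₂₂ := by
  have h : M * N = Matrix.fromBlocks M.toBlocks₁₁ M.toBlocks₁₂ M.toBlocks₂₁ M.toBlocks₂₂
      * Matrix.fromBlocks N.toBlocks₁₁ N.toBlocks₁₂ N.toBlocks₂₁ N.toBlocks₂₂ := by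
    rw [Matrix.fromBlocks_toBlocks, Matrix.fromBlocks_toBlocks]
  rw [h, Matrix.fromBlocks_multiply, Matrix.toBlocks_fromBlocks₂₂]

/-- Main derivative computation, entrywise. -/
lemma main_deriv (n : ℕ) (g X : BMat n) (hgD : IsUnit g.toBlocks₂₂) (M : Mat n)
    (hM : (g * X).toBlocks₁₂ * (g.toBlocks₂₂)⁻¹ +
      g.toBlocks₁₂ * -((g.toBlocks₂₂)⁻¹ * (g * X).toBlocks₂₂ * (g.toBlocks₂₂)⁻¹) = M)
    (i j : Fin n) :
    HasDerivAt (fun t : ℝ =>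
        ((g * NormedSpace.exp ((t : ℂ) • X)).toBlocks₁₂
          * ((g * NormedSpace.exp ((t : ℂ) • X)).toBlocks₂₂)⁻¹) i j) (M i j) 0 := by
  letI : SeminormedRing (BMat n) := Matrix.linftyOpSemiNormedRing
  letI : NormedRing (BMat n) := Matrix.linftyOpNormedRing
  letI : NormedAlgebra ℂ (BMat n) := Matrix.linftyOpNormedAlgebra
  letI : SeminormedRing (Mat n) := Matrix.linftyOpSemiNormedRing
  letI : NormedRing (Mat n) := Matrix.linftyOpNormedRing
  letI : NormedAlgebra ℂ (Mat n) := Matrix.linftyOpNormedAlgebra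
  have h1 : HasDerivAt (fun u : ℂ => NormedSpace.exp (u • X)) X (0 : ℂ) := by
    have h := hasDerivAt_exp_smul_const (𝕂 := ℂ) X (0 : ℂ); simp at h; exact h
  have h2 : HasDerivAt (fun t : ℝ => NormedSpace.exp ((t : ℂ) • X)) X (0 : ℝ) :=
    hasDerivAt_comp_ofReal h1
  have h3 : HasDerivAt (fun t : ℝ => g * NormedSpace.exp ((t : ℂ) • X)) (g * X) (0 : ℝ) :=
    h2.const_mul g
  let L12 : BMat n →L[ℂ] Mat n := LinearMap.toContinuousLinearMap (blk12 n)
  let L22 : BMat n →L[ℂ] Mat n := LinearMap.toContinuousLinearMap (blk22 n)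
  have hB : HasDerivAt (fun t : ℝ => (g * NormedSpace.exp ((t : ℂ) • X)).toBlocks₁₂)
      ((g * X).toBlocks₁₂) (0 : ℝ) :=
    by exact (L12.restrictScalars ℝ).hasFDerivAt.comp_hasDerivAt 0 h3
  have hD : HasDerivAt (fun t : ℝ => (g * NormedSpace.exp ((t : ℂ) • X)).toBlocks₂₂)
      ((g * X).toBlocks₂₂) (0 : ℝ) :=
    by exact (L22.restrictScalars ℝ).hasFDerivAt.comp_hasDerivAt 0 h3
  have hfun0 : g * NormedSpace.exp (((0 : ℝ) : ℂ) • X) = g := by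
    simp [NormedSpace.exp_zero]
  have hu12 : ((hgD.unit⁻¹ : (Mat n)ˣ) : Mat n) = (g.toBlocks₂₂)⁻¹ := by
    rw [Matrix.coe_units_inv, hgD.unit_spec]
  have hfd : HasFDerivAt (Ring.inverse : Mat n → Mat n)
      (-(ContinuousLinearMap.mulLeftRight ℝ (Mat n) ((g.toBlocks₂₂)⁻¹) ((g.toBlocks₂₂)⁻¹)))
      ((g * NormedSpace.exp (((0 : ℝ) : ℂ) • X)).toBlocks₂₂) := by
    rw [hfun0]
    have h := hasFDerivAt_ringInverse (𝕜 := ℝ) hgD.unit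
    rw [hu12] at h
    rwa [hgD.unit_spec] at h
  have hDinv' := hfd.comp_hasDerivAt (0 : ℝ) hD
  have hDinv : HasDerivAt
      (fun t : ℝ => ((g * NormedSpace.exp ((t : ℂ) • X)).toBlocks₂₂)⁻¹)
      (-((g.toBlocks₂₂)⁻¹ * (g * X).toBlocks₂₂ * (g.toBlocks₂₂)⁻¹)) (0 : ℝ) := by
    have hfe : (fun t : ℝ => Ring.inverse ((g * NormedSpace.exp ((t : ℂ) • X)).toBlocks₂₂))
        = fun t : ℝ => ((g * NormedSpace.exp ((t : ℂ) • X)).toBlocks₂₂)⁻¹ :=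
      funext fun t => (Matrix.nonsing_inv_eq_ringInverse _).symm
    rw [Function.comp_def, hfe] at hDinv'
    simp at hDinv'; exact hDinv'
  have hBD := hB.mul hDinv
  rw [hfun0] at hBD
  let e : Mat n →L[ℂ] ℂ := LinearMap.toContinuousLinearMap (Matrix.entryLinearMap ℂ ℂ i j)
  have hfinal := (e.restrictScalars ℝ).hasFDerivAt.comp_hasDerivAt 0 hBD
  rw [← hM]
  exact hfinal

/-- Lemma 2.3 (derivative of the orbit map at `0`): for `g = (A B; C D) ∈ SU(n,n)` and
`X = (α β; γ δ) ∈ su(n,n)`, writing `g exp(tX) = (A_t B_t; C_t D_t)`, the block `D_t` is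
invertible for all `t`, `B₀D₀⁻¹ = BD⁻¹`, the map `t ↦ B_t D_t⁻¹` is differentiable at
`t = 0` (entrywise) with derivative `(A*)⁻¹ β D⁻¹`, and `A − BD⁻¹C = (A*)⁻¹`. -/
theorem statement6 (n : ℕ) (hn : 1 ≤ n) (g : BMat n) (hg : g ∈ SUnn n)
    (X : BMat n) (hX : X ∈ sunn n) :
    (∀ t : ℝ, IsUnit ((g * matExp n ((t : ℂ) • X)).toBlocks₂₂)) ∧
    (g * matExp n (((0 : ℝ) : ℂ) • X)).toBlocks₁₂
        * ((g * matExp n (((0 : ℝ) : ℂ) • X)).toBlocks₂₂)⁻¹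
      = g.toBlocks₁₂ * (g.toBlocks₂₂)⁻¹ ∧
    (∀ i j : Fin n, HasDerivAt (fun t : ℝ =>
        ((g * matExp n ((t : ℂ) • X)).toBlocks₁₂
          * ((g * matExp n ((t : ℂ) • X)).toBlocks₂₂)⁻¹) i j)
      (((g.toBlocks₁₁ᴴ)⁻¹ * X.toBlocks₁₂ * (g.toBlocks₂₂)⁻¹) i j) 0) ∧
    g.toBlocks₁₁ - g.toBlocks₁₂ * (g.toBlocks₂₂)⁻¹ * g.toBlocks₂₁ = (g.toBlocks₁₁ᴴ)⁻¹ := by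
  obtain ⟨hdet, hgJ⟩ := hg
  obtain ⟨hX1, hXtr⟩ := hX
  -- membership of `g exp(tX)` in the form-preserving group
  have hmem : ∀ t : ℝ, (g * matExp n ((t : ℂ) • X))ᴴ * Jmat n * (g * matExp n ((t : ℂ) • X))
      = Jmat n := by
    intro t
    rw [matExp_eq]
    have he := exp_mem n X hX1 t
    calc (g * NormedSpace.exp ((t : ℂ) • X))ᴴ * Jmat n * (g * NormedSpace.exp ((t : ℂ) • X))
        = (NormedSpace.exp ((t : ℂ) • X))ᴴ * (gᴴ * Jmat n * g)
          * NormedSpace.exp ((t : ℂ) • X) := by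
          rw [Matrix.conjTranspose_mul]; simp only [Matrix.mul_assoc]
      _ = (NormedSpace.exp ((t : ℂ) • X))ᴴ * Jmat n * NormedSpace.exp ((t : ℂ) • X) := by
          rw [hgJ, Matrix.mul_assoc]
      _ = Jmat n := he
  have hunit : ∀ t : ℝ, IsUnit ((g * matExp n ((t : ℂ) • X)).toBlocks₂₂) := by
    intro t
    obtain ⟨-, -, h22⟩ := su_rel n _ (hmem t)
    have h' : (g * matExp n ((t : ℂ) • X)).toBlocks₂₂ᴴ * (g * matExp n ((t : ℂ) • X)).toBlocks₂₂
        - (g * matExp n ((t : ℂ) • X)).toBlocks₁₂ᴴ * (g * matExp n ((t : ℂ) • X)).toBlocks₁₂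
        = 1 := by
      rw [← neg_sub, h22, neg_neg]
    rw [sub_eq_iff_eq_add] at h'
    exact isUnit_of_chmul _ _ h'
  obtain ⟨h11, h12, h22⟩ := su_rel n g hgJ
  have hD : IsUnit g.toBlocks₂₂ := by
    have h' : g.toBlocks₂₂ᴴ * g.toBlocks₂₂ - g.toBlocks₁₂ᴴ * g.toBlocks₁₂ = 1 := by
      rw [← neg_sub, h22, neg_neg]
    rw [sub_eq_iff_eq_add] at h'
    exact isUnit_of_chmul _ _ h'
  have schur : g.toBlocks₁₁ - g.toBlocks₁₂ * (g.toBlocks₂₂)⁻¹ * g.toBlocks₂₁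
      = (g.toBlocks₁₁ᴴ)⁻¹ := schur_identity _ _ _ _ h11 h12 hD
  refine ⟨hunit, ?_, ?_, schur⟩
  · simp [matExp_eq, NormedSpace.exp_zero]
  · intro i j
    have hDD : (g.toBlocks₂₂)⁻¹ * g.toBlocks₂₂ = 1 :=
      Matrix.nonsing_inv_mul _ (Matrix.isUnit_iff_isUnit_det _ |>.mp hD)
    have hM : (g * X).toBlocks₁₂ * (g.toBlocks₂₂)⁻¹ +
        g.toBlocks₁₂ * -((g.toBlocks₂₂)⁻¹ * (g * X).toBlocks₂₂ * (g.toBlocks₂₂)⁻¹)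
        = (g.toBlocks₁₁ᴴ)⁻¹ * X.toBlocks₁₂ * (g.toBlocks₂₂)⁻¹ := by
      rw [toBlocks₁₂_mul, toBlocks₂₂_mul, ← schur]
      set A := g.toBlocks₁₁; set B := g.toBlocks₁₂; set C := g.toBlocks₂₁; set D := g.toBlocks₂₂
      set β := X.toBlocks₁₂; set δ := X.toBlocks₂₂
      calc (A * β + B * δ) * D⁻¹ + B * -(D⁻¹ * (C * β + D * δ) * D⁻¹)
          = A * β * D⁻¹ + B * δ * D⁻¹ - B * D⁻¹ * C * β * D⁻¹
            - B * ((D⁻¹ * D) * (δ * D⁻¹)) := by noncomm_ring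
        _ = (A - B * D⁻¹ * C) * β * D⁻¹ := by rw [hDD]; noncomm_ring
    have hre : (fun t : ℝ =>
        ((g * matExp n ((t : ℂ) • X)).toBlocks₁₂
          * ((g * matExp n ((t : ℂ) • X)).toBlocks₂₂)⁻¹) i j) = (fun t : ℝ =>
        ((g * NormedSpace.exp ((t : ℂ) • X)).toBlocks₁₂
          * ((g * NormedSpace.exp ((t : ℂ) • X)).toBlocks₂₂)⁻¹) i j) := by
      simp only [matExp_eq]
    rw [hre]
    exact main_deriv n g X hD _ hM i j

end
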